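/- The divergence-zero derivations S(n) ⊂ W(n) — the subalgebra spanned at each level 1−p by the traceless tensors K^{a_1⋯a_p}{}_b (those with all contractions of b against an upper index vanishing) plus all of level 1 and the traceless part of level 0 — form a Z-graded Lie subalgebra of W(n) whose components vanish below level −n+2. -/

import Mathlib

/-- The generator `θ^a` of the Grassmann algebra `Λ(n) = ExteriorAlgebra K (Fin n → K)`. -/
noncomputable def theta (K : Type) [Field K] (n : ℕ) (a : Fin n) :
    ExteriorAlgebra K (Fin n → K) :=
  ExteriorAlgebra.ι K (Pi.single a 1)

/-- The degree-`q` component of the Grassmann algebra. -/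
noncomputable def grassDeg (K : Type) [Field K] (n : ℕ) (q : ℕ) :
    Submodule K (ExteriorAlgebra K (Fin n → K)) :=
  LinearMap.range (ExteriorAlgebra.ι K : (Fin n → K) →ₗ[K] ExteriorAlgebra K (Fin n → K)) ^ q

/-- The parity-`i` component of the Grassmann algebra. -/
noncomputable def grassPar (K : Type) [Field K] (n : ℕ) (i : ZMod 2) :
    Submodule K (ExteriorAlgebra K (Fin n → K)) :=
  ⨆ q ∈ {q : ℕ | (q : ZMod 2) = i}, grassDeg K n q

/-- A superderivation of the Grassmann algebra of parity `ε`: a parity-homogeneous linear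
map satisfying the graded Leibniz rule `d(xy) = d(x)y + (−1)^{|d||x|} x d(y)`. -/
def IsSuperDer (K : Type) [Field K] (n : ℕ) (ε : ZMod 2)
    (d : Module.End K (ExteriorAlgebra K (Fin n → K))) : Prop :=
  (∀ i : ZMod 2, ∀ x ∈ grassPar K n i, d x ∈ grassPar K n (i + ε)) ∧
  (∀ q : ℕ, ∀ x ∈ grassDeg K n q, ∀ y,
    d (x * y) = d x * y + ((-1 : K) ^ (ε.val * q)) • (x * d y))

/-- `D` is the family of odd partial derivatives `∂/∂θ^b`: the odd superderivations with
`∂θ^a/∂θ^b = δ^a_b`. -/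
def IsPartials (K : Type) [Field K] (n : ℕ)
    (D : Fin n → Module.End K (ExteriorAlgebra K (Fin n → K))) : Prop :=
  ∀ b, IsSuperDer K n 1 (D b) ∧
    ∀ a, D b (theta K n a) = algebraMap K _ (if a = b then (1 : K) else 0)

/-- The derivation `K^{a_1⋯a_p}{}_b = θ^{a_1}⋯θ^{a_p} ∂/∂θ^b`. -/
noncomputable def Kgen (K : Type) [Field K] (n : ℕ)
    (D : Fin n → Module.End K (ExteriorAlgebra K (Fin n → K)))
    (p : ℕ) (a : Fin p → Fin n) (b : Fin n) :
    Module.End K (ExteriorAlgebra K (Fin n → K)) :=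
  LinearMap.mulLeft K ((List.ofFn fun i => theta K n (a i)).prod) ∘ₗ D b

/-- The level-`ℓ` component of `W(n)`: the span of the `K^{a_1⋯a_p}{}_b` with `ℓ = 1 - p`. -/
noncomputable def Wlevel (K : Type) [Field K] (n : ℕ)
    (D : Fin n → Module.End K (ExteriorAlgebra K (Fin n → K))) (ℓ : ℤ) :
    Submodule K (Module.End K (ExteriorAlgebra K (Fin n → K))) :=
  Submodule.span K {d | ∃ (p : ℕ) (a : Fin p → Fin n) (b : Fin n),
    ℓ = 1 - (p : ℤ) ∧ d = Kgen K n D p a b}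

/-- The divergence of a derivation: `div d = Σ_b ∂/∂θ^b (d θ^b)`. -/
noncomputable def divMap (K : Type) [Field K] (n : ℕ)
    (D : Fin n → Module.End K (ExteriorAlgebra K (Fin n → K))) :
    Module.End K (ExteriorAlgebra K (Fin n → K)) →ₗ[K] ExteriorAlgebra K (Fin n → K) where
  toFun d := ∑ b, D b (d (theta K n b))
  map_add' := by intro d₁ d₂; simp [Finset.sum_add_distrib]
  map_smul' := by intro c d; simp [Finset.smul_sum]

/-- The level-`ℓ` component of `S(n)`: the divergence-free part of `Wlevel ℓ`. -/
noncomputable def Slevel (K : Type) [Field K] (n : ℕ)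
    (D : Fin n → Module.End K (ExteriorAlgebra K (Fin n → K))) (ℓ : ℤ) :
    Submodule K (Module.End K (ExteriorAlgebra K (Fin n → K))) :=
  Wlevel K n D ℓ ⊓ LinearMap.ker (divMap K n D)

namespace S13

variable {K : Type} [Field K] {n : ℕ}

/-- The monomial `θ^{a_1} ⋯ θ^{a_p}`. -/
noncomputable def mon {p : ℕ} (a : Fin p → Fin n) : ExteriorAlgebra K (Fin n → K) :=
  (List.ofFn fun i => theta K n (a i)).prod

lemma mon_zero (a : Fin 0 → Fin n) : (mon a : ExteriorAlgebra K (Fin n → K)) = 1 := by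
  simp [mon]

lemma mon_succ {p : ℕ} (a : Fin (p+1) → Fin n) :
    (mon a : ExteriorAlgebra K (Fin n → K)) = theta K n (a 0) * mon (a ∘ Fin.succ) := by
  simp [mon, List.ofFn_succ, Function.comp]

lemma mon_one (a : Fin 1 → Fin n) : (mon a : ExteriorAlgebra K (Fin n → K)) = theta K n (a 0) := by
  rw [mon_succ]
  simp [mon_zero]

lemma mon_append {p q : ℕ} (a : Fin p → Fin n) (c : Fin q → Fin n) :
    (mon (Fin.append a c) : ExteriorAlgebra K (Fin n → K)) = mon a * mon c := by
  have h : (fun i => theta K n (Fin.append a c i)) =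
      Fin.append (fun i => theta K n (a i)) (fun j => theta K n (c j)) := by
    funext i
    cases i using Fin.addCases with
    | left i => simp
    | right i => simp
  rw [mon, h, List.ofFn_fin_append, List.prod_append]
  rfl

lemma theta_mem_deg1 (a : Fin n) : theta K n a ∈ grassDeg K n 1 := by
  rw [grassDeg, pow_one]
  exact ⟨_, rfl⟩

lemma one_mem_deg0 : (1 : ExteriorAlgebra K (Fin n → K)) ∈ grassDeg K n 0 := by
  rw [grassDeg, pow_zero, Submodule.one_eq_range]
  exact ⟨1, by simp⟩

lemma mon_mem_deg {p : ℕ} (a : Fin p → Fin n) : (mon a : ExteriorAlgebra K (Fin n → K)) ∈ grassDeg K n p := by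
  induction p with
  | zero => rw [mon_zero]; exact one_mem_deg0
  | succ p ih =>
    rw [mon_succ, grassDeg, pow_succ']
    exact Submodule.mul_mem_mul ⟨_, rfl⟩ (ih _)

end S13
namespace S13

section D

variable {K : Type} [Field K] {n : ℕ}
  {D : Fin n → Module.End K (ExteriorAlgebra K (Fin n → K))}
  (hD : IsPartials K n D)

include hD

lemma leibniz {q : ℕ} {x : ExteriorAlgebra K (Fin n → K)} (hx : x ∈ grassDeg K n q)
    (b : Fin n) (y : ExteriorAlgebra K (Fin n → K)) :
    D b (x * y) = D b x * y + ((-1 : K) ^ q) • (x * D b y) := by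
  have h := (hD b).1.2 q x hx y
  have hv : ((1 : ZMod 2)).val * q = q := by
    rw [ZMod.val_one, one_mul]
  rwa [hv] at h

lemma D_one (b : Fin n) : D b (1 : ExteriorAlgebra K (Fin n → K)) = 0 := by
  have h := leibniz hD (one_mem_deg0 (K := K) (n := n)) b 1
  simp only [mul_one, one_mul, pow_zero, one_smul] at h
  exact (left_eq_add.mp h)

lemma D_algebraMap (b : Fin n) (c : K) :
    D b (algebraMap K (ExteriorAlgebra K (Fin n → K)) c) = 0 := by
  rw [Algebra.algebraMap_eq_smul_one, map_smul, D_one hD, smul_zero]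

lemma D_theta_mul (b a : Fin n) (y : ExteriorAlgebra K (Fin n → K)) :
    D b (theta K n a * y)
      = (if a = b then (1 : K) else 0) • y - theta K n a * D b y := by
  have h := leibniz hD (theta_mem_deg1 a) b y
  rw [(hD b).2 a, ← Algebra.smul_def, pow_one, neg_smul, one_smul] at h
  rw [h, sub_eq_add_neg]

lemma D_anticomm_mon : ∀ (p : ℕ) (c : Fin p → Fin n) (b d : Fin n),
    D b (D d (mon c)) = - D d (D b (mon c)) := by
  intro p
  induction p with
  | zero =>
    intro c b d
    rw [mon_zero]
    simp [D_one hD]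
  | succ p ih =>
    intro c b d
    have e1 := D_theta_mul hD d (c 0) (mon (c ∘ Fin.succ))
    have e2 := D_theta_mul hD b (c 0) (mon (c ∘ Fin.succ))
    have e3 := D_theta_mul hD b (c 0) (D d (mon (c ∘ Fin.succ)))
    have e4 := D_theta_mul hD d (c 0) (D b (mon (c ∘ Fin.succ)))
    rw [mon_succ, e1, e2, map_sub, map_sub, map_smul, map_smul, e3, e4,
      ih (c ∘ Fin.succ) b d]
    simp only [mul_neg, smul_neg, neg_sub, sub_eq_add_neg, neg_add, neg_neg]
    abel

end D

end S13
namespace S13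

variable {K : Type} [Field K] {n : ℕ}

/-- Span of monomials of length `r`. -/
noncomputable def Mono (K : Type) [Field K] (n r : ℕ) :
    Submodule K (ExteriorAlgebra K (Fin n → K)) :=
  Submodule.span K {x | ∃ c : Fin r → Fin n, x = mon c}

lemma mon_mem_mono {r : ℕ} (c : Fin r → Fin n) : (mon c : ExteriorAlgebra K (Fin n → K)) ∈ Mono K n r :=
  Submodule.subset_span ⟨c, rfl⟩

lemma theta_mul_mon {r : ℕ} (a : Fin n) (c : Fin r → Fin n) :
    theta K n a * mon c = (mon (Fin.cons a c) : ExteriorAlgebra K (Fin n → K)) := by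
  rw [mon_succ, Fin.cons_zero,
    show (Fin.cons a c ∘ Fin.succ) = c from funext fun i => by simp]

lemma theta_mul_mono {r : ℕ} (a : Fin n) {u : ExteriorAlgebra K (Fin n → K)}
    (hu : u ∈ Mono K n r) : theta K n a * u ∈ Mono K n (r + 1) := by
  induction hu using Submodule.span_induction with
  | mem x hx =>
    obtain ⟨c, rfl⟩ := hx
    rw [theta_mul_mon]
    exact mon_mem_mono _
  | zero => simp
  | add x y _ _ hx hy => rw [mul_add]; exact add_mem hx hy
  | smul t x _ hx => rw [mul_smul_comm]; exact Submodule.smul_mem _ _ hx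

lemma mon_mul_mono {p r : ℕ} (a : Fin p → Fin n) {u : ExteriorAlgebra K (Fin n → K)}
    (hu : u ∈ Mono K n r) : mon a * u ∈ Mono K n (p + r) := by
  induction p with
  | zero => rw [mon_zero, one_mul, Nat.zero_add]; exact hu
  | succ p ih =>
    rw [mon_succ, mul_assoc]
    have h := theta_mul_mono (a 0) (ih (a ∘ Fin.succ))
    rwa [show p + r + 1 = p + 1 + r by omega] at h

lemma mono_mul_mono {r s : ℕ} {u v : ExteriorAlgebra K (Fin n → K)}
    (hu : u ∈ Mono K n r) (hv : v ∈ Mono K n s) : u * v ∈ Mono K n (r + s) := by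
  induction hu using Submodule.span_induction with
  | mem x hx => obtain ⟨c, rfl⟩ := hx; exact mon_mul_mono c hv
  | zero => simp
  | add x y _ _ hx hy => rw [add_mul]; exact add_mem hx hy
  | smul t x _ hx => rw [smul_mul_assoc]; exact Submodule.smul_mem _ _ hx

lemma mem_monoSpan (x : ExteriorAlgebra K (Fin n → K)) :
    x ∈ Submodule.span K {x : ExteriorAlgebra K (Fin n → K) |
      ∃ (p : ℕ) (c : Fin p → Fin n), x = mon c} := by
  set S : Set (ExteriorAlgebra K (Fin n → K)) :=
    {x | ∃ (p : ℕ) (c : Fin p → Fin n), x = mon c} with hS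
  have hmul : Submodule.span K S * Submodule.span K S ≤ Submodule.span K S := by
    rw [Submodule.span_mul_span]
    apply Submodule.span_le.mpr
    rintro z ⟨x, hx, y, hy, rfl⟩
    obtain ⟨p, c, rfl⟩ := hx
    obtain ⟨q, e, rfl⟩ := hy
    exact Submodule.subset_span ⟨p + q, Fin.append c e, (mon_append c e).symm⟩
  induction x using ExteriorAlgebra.induction with
  | algebraMap r =>
    rw [Algebra.algebraMap_eq_smul_one]
    exact Submodule.smul_mem _ _ (Submodule.subset_span ⟨0, Fin.elim0, (mon_zero _).symm⟩)
  | ι m =>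
    have hm : m = ∑ a : Fin n, m a • (Pi.single a 1 : Fin n → K) := by
      funext j
      rw [Finset.sum_apply]
      simp [Pi.single_apply]
    rw [hm, map_sum]
    refine Submodule.sum_mem _ fun a _ => ?_
    rw [map_smul]
    refine Submodule.smul_mem _ _ (Submodule.subset_span ⟨1, fun _ => a, ?_⟩)
    rw [mon_one]
    rfl
  | mul a b ha hb => exact hmul (Submodule.mul_mem_mul ha hb)
  | add a b ha hb => exact add_mem ha hb

lemma End_ext {f g : Module.End K (ExteriorAlgebra K (Fin n → K))}
    (h : ∀ (p : ℕ) (c : Fin p → Fin n), f (mon c) = g (mon c)) : f = g := by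
  apply LinearMap.ext
  intro x
  have hx := mem_monoSpan (K := K) (n := n) x
  induction hx using Submodule.span_induction with
  | mem x hx => obtain ⟨p, c, rfl⟩ := hx; exact h p c
  | zero => simp
  | add x y _ _ hx hy => simp [map_add, hx, hy]
  | smul t x _ hx => simp [map_smul, hx]

lemma theta_theta (a b : Fin n) :
    theta K n a * theta K n b = -(theta K n b * theta K n a) := by
  have h := ExteriorAlgebra.ι_add_mul_swap (R := K) (Pi.single a (1:K) : Fin n → K)
    (Pi.single b (1:K) : Fin n → K)
  rw [theta, theta]
  exact eq_neg_of_add_eq_zero_left h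

lemma theta_mon_comm {r : ℕ} (c : Fin r → Fin n) (a : Fin n) :
    theta K n a * mon c = ((-1 : K) ^ r) • ((mon c : ExteriorAlgebra K (Fin n → K)) * theta K n a) := by
  induction r with
  | zero => rw [mon_zero, one_mul, mul_one, pow_zero, one_smul]
  | succ r ih =>
    rw [mon_succ, ← mul_assoc, theta_theta, neg_mul, mul_assoc, ih (c ∘ Fin.succ),
      mul_smul_comm, mul_assoc, pow_succ]
    module

lemma mon_mon_comm {p q : ℕ} (a : Fin p → Fin n) (c : Fin q → Fin n) :
    (mon a : ExteriorAlgebra K (Fin n → K)) * mon c = ((-1 : K) ^ (p * q)) • (mon c * mon a) := by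
  induction p with
  | zero => rw [mon_zero, one_mul, mul_one, Nat.zero_mul, pow_zero, one_smul]
  | succ p ih =>
    rw [mon_succ, mul_assoc, ih (a ∘ Fin.succ), mul_smul_comm, ← mul_assoc,
      theta_mon_comm, smul_mul_assoc, smul_smul, ← pow_add, mul_assoc,
      show p * q + q = (p + 1) * q by ring, ← mon_succ]

lemma mono_comm {r s : ℕ} {u v : ExteriorAlgebra K (Fin n → K)}
    (hu : u ∈ Mono K n r) (hv : v ∈ Mono K n s) :
    u * v = ((-1 : K) ^ (r * s)) • (v * u) := by
  induction hu using Submodule.span_induction with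
  | mem x hx =>
    obtain ⟨a, rfl⟩ := hx
    induction hv using Submodule.span_induction with
    | mem y hy => obtain ⟨c, rfl⟩ := hy; exact mon_mon_comm a c
    | zero => simp
    | add y z _ _ h1 h2 => rw [mul_add, h1, h2, add_mul, smul_add]
    | smul t y _ h1 => rw [mul_smul_comm, h1, smul_mul_assoc, smul_comm]
  | zero => simp
  | add x y _ _ h1 h2 => rw [add_mul, h1, h2, mul_add, smul_add]
  | smul t x _ h1 => rw [smul_mul_assoc, h1, mul_smul_comm, smul_comm]

lemma mon_eq_zero_of_large {p : ℕ} (a : Fin p → Fin n) (h : n < p) :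
    (mon a : ExteriorAlgebra K (Fin n → K)) = 0 := by
  have he : (mon a : ExteriorAlgebra K (Fin n → K))
      = ExteriorAlgebra.ιMulti K p (fun i => Pi.single (a i) (1 : K)) :=
    (ExteriorAlgebra.ιMulti_apply _).symm
  obtain ⟨i, j, hne, heq⟩ := Fintype.exists_ne_map_eq_of_card_lt a (by simpa using h)
  rw [he]
  exact AlternatingMap.map_eq_zero_of_eq _ _ (by rw [heq]) hne

lemma mono_eq_bot {r : ℕ} (h : n < r) : Mono K n r = (⊥ : Submodule K (ExteriorAlgebra K (Fin n → K))) := by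
  rw [Mono, eq_bot_iff]
  apply Submodule.span_le.mpr
  rintro x ⟨c, rfl⟩
  simp [mon_eq_zero_of_large c h]

end S13
namespace S13

section D2

variable {K : Type} [Field K] {n : ℕ}
  {D : Fin n → Module.End K (ExteriorAlgebra K (Fin n → K))}
  (hD : IsPartials K n D)

include hD

lemma D_anticomm (b d : Fin n) (x : ExteriorAlgebra K (Fin n → K)) :
    D b (D d x) = - D d (D b x) := by
  have h : ((D b) ∘ₗ (D d) : Module.End K (ExteriorAlgebra K (Fin n → K)))
      = -((D d) ∘ₗ (D b)) := by
    apply End_ext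
    intro p c
    simp only [LinearMap.comp_apply, LinearMap.neg_apply]
    exact D_anticomm_mon hD p c b d
  simpa using LinearMap.congr_fun h x

lemma D_anticomm_End (b d : Fin n) :
    ((D b) ∘ₗ (D d) : Module.End K (ExteriorAlgebra K (Fin n → K)))
      = -((D d) ∘ₗ (D b)) := by
  apply LinearMap.ext
  intro x
  simpa using D_anticomm hD b d x

lemma D_mon_mem : ∀ (p : ℕ) (c : Fin p → Fin n) (b : Fin n),
    D b (mon c) ∈ Mono K n (p - 1) := by
  intro p
  induction p with
  | zero =>
    intro c b
    rw [mon_zero, D_one hD]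
    exact zero_mem _
  | succ p ih =>
    intro c b
    rw [mon_succ, D_theta_mul hD]
    refine sub_mem (Submodule.smul_mem _ _ (mon_mem_mono _)) ?_
    cases p with
    | zero =>
      rw [mon_zero, D_one hD, mul_zero]
      exact zero_mem _
    | succ s =>
      have h := theta_mul_mono (c 0) (ih (c ∘ Fin.succ) b)
      simpa using h

omit hD in
/-- `divMap` applied. -/
lemma divMap_apply (d : Module.End K (ExteriorAlgebra K (Fin n → K))) :
    divMap K n D d = ∑ b, D b (d (theta K n b)) := rfl

omit hD in
lemma Kgen_eq (p : ℕ) (a : Fin p → Fin n) (b : Fin n) :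
    Kgen K n D p a b = LinearMap.mulLeft K (mon a) ∘ₗ D b := rfl

lemma div_mulLeft_D (u : ExteriorAlgebra K (Fin n → K)) (e : Fin n) :
    divMap K n D (LinearMap.mulLeft K u ∘ₗ D e) = D e u := by
  rw [divMap_apply]
  have h : ∀ b : Fin n, D b ((LinearMap.mulLeft K u ∘ₗ D e) (theta K n b))
      = if b = e then D b u else 0 := by
    intro b
    rw [LinearMap.comp_apply, LinearMap.mulLeft_apply, (hD e).2 b, ← Algebra.commutes,
      ← Algebra.smul_def]
    by_cases hbe : b = e <;> simp [hbe]
  rw [Finset.sum_congr rfl (fun b _ => h b), Finset.sum_ite_eq' Finset.univ e (fun b => D b u)]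
  simp

lemma comp_formula {p q : ℕ} (a : Fin p → Fin n) (c : Fin q → Fin n) (b d : Fin n) :
    Kgen K n D p a b ∘ₗ Kgen K n D q c d
      = LinearMap.mulLeft K (mon a * D b (mon c)) ∘ₗ D d
        + ((-1 : K) ^ q) • (LinearMap.mulLeft K (mon a * mon c) ∘ₗ ((D b) ∘ₗ (D d))) := by
  apply LinearMap.ext
  intro x
  simp only [Kgen_eq, LinearMap.comp_apply, LinearMap.add_apply, LinearMap.smul_apply,
    LinearMap.mulLeft_apply]
  rw [leibniz hD (mon_mem_deg c) b (D d x)]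
  rw [mul_add, mul_smul_comm, mul_assoc, mul_assoc]

end D2

end S13
namespace S13

section Signs

variable {K : Type} [Field K]

lemma neg_one_zpow_congr {m m' : ℤ} (h : Even (m - m')) : (-1 : K) ^ m = (-1 : K) ^ m' := by
  have hne : (-1 : K) ≠ 0 := by norm_num
  obtain ⟨t, ht⟩ := h
  have hm : m = m' + 2 * t := by omega
  rw [hm, zpow_add₀ hne, zpow_mul]
  norm_num

lemma sign1 (p q : ℕ) :
    ((-1 : K) ^ ((1 - (p : ℤ)) * (1 - (q : ℤ)))) * ((-1 : K) ^ p * (-1 : K) ^ (q * p))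
      = -(-1 : K) ^ q := by
  have hne : (-1 : K) ≠ 0 := by norm_num
  rw [← zpow_natCast (-1 : K) p, ← zpow_natCast (-1 : K) (q * p),
    ← zpow_add₀ hne, ← zpow_add₀ hne]
  have hq : -(-1 : K) ^ q = (-1 : K) ^ ((q : ℤ) + 1) := by
    rw [zpow_add₀ hne, zpow_natCast, zpow_one]
    ring
  rw [hq]
  apply neg_one_zpow_congr
  have he : (1 - (p : ℤ)) * (1 - (q : ℤ)) + (((p : ℕ) : ℤ) + ((q * p : ℕ) : ℤ)) - ((q : ℤ) + 1)
      = 2 * ((p : ℤ) * q - q) := by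
    push_cast
    ring
  rw [he]
  exact even_two_mul _

end Signs

section ML

variable {K : Type} [Field K] {n : ℕ}
  {D : Fin n → Module.End K (ExteriorAlgebra K (Fin n → K))}

lemma mulLeft_zero_D (e : Fin n) :
    LinearMap.mulLeft K (0 : ExteriorAlgebra K (Fin n → K)) ∘ₗ D e = 0 := by
  apply LinearMap.ext
  intro z
  simp

lemma mulLeft_add_D (u v : ExteriorAlgebra K (Fin n → K)) (e : Fin n) :
    LinearMap.mulLeft K (u + v) ∘ₗ D e
      = LinearMap.mulLeft K u ∘ₗ D e + LinearMap.mulLeft K v ∘ₗ D e := by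
  apply LinearMap.ext
  intro z
  simp [add_mul]

lemma mulLeft_smul_D (t : K) (u : ExteriorAlgebra K (Fin n → K)) (e : Fin n) :
    LinearMap.mulLeft K (t • u) ∘ₗ D e = t • (LinearMap.mulLeft K u ∘ₗ D e) := by
  apply LinearMap.ext
  intro z
  simp [smul_mul_assoc]

lemma mulLeft_mono_D {r : ℕ} {u : ExteriorAlgebra K (Fin n → K)} (hu : u ∈ Mono K n r)
    (e : Fin n) : LinearMap.mulLeft K u ∘ₗ D e ∈ Wlevel K n D (1 - (r : ℤ)) := by
  induction hu using Submodule.span_induction with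
  | mem x hx =>
    obtain ⟨c, rfl⟩ := hx
    exact Submodule.subset_span ⟨r, c, e, rfl, rfl⟩
  | zero => rw [mulLeft_zero_D]; exact zero_mem _
  | add x y _ _ hx hy => rw [mulLeft_add_D]; exact add_mem hx hy
  | smul t x _ hx => rw [mulLeft_smul_D]; exact Submodule.smul_mem _ _ hx

end ML

section Gen

variable {K : Type} [Field K] {n : ℕ}
  {D : Fin n → Module.End K (ExteriorAlgebra K (Fin n → K))}
  (hD : IsPartials K n D)

include hD

lemma gen_bracket {p q : ℕ} (a : Fin p → Fin n) (c : Fin q → Fin n) (b d : Fin n) :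
    Kgen K n D p a b ∘ₗ Kgen K n D q c d
        - ((-1 : K) ^ ((1 - (p : ℤ)) * (1 - (q : ℤ)))) • (Kgen K n D q c d ∘ₗ Kgen K n D p a b)
      = LinearMap.mulLeft K (mon a * D b (mon c)) ∘ₗ D d
        - ((-1 : K) ^ ((1 - (p : ℤ)) * (1 - (q : ℤ)))) •
            (LinearMap.mulLeft K (mon c * D d (mon a)) ∘ₗ D b) := by
  have E2 : LinearMap.mulLeft K (mon c * mon a) ∘ₗ ((D d) ∘ₗ (D b))
      = (-(-1 : K) ^ (q * p)) •
          (LinearMap.mulLeft K (mon a * mon c) ∘ₗ ((D b) ∘ₗ (D d))) := by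
    rw [mon_mon_comm c a, D_anticomm_End hD d b]
    apply LinearMap.ext
    intro z
    simp only [LinearMap.comp_apply, LinearMap.mulLeft_apply, LinearMap.smul_apply,
      LinearMap.neg_apply]
    rw [smul_mul_assoc, mul_neg, neg_smul, smul_neg]
  rw [comp_formula hD a c b d, comp_formula hD c a d b, E2]
  have hw : ((-1 : K) ^ q) • (LinearMap.mulLeft K (mon a * mon c) ∘ₗ ((D b) ∘ₗ (D d)))
      - ((-1 : K) ^ ((1 - (p : ℤ)) * (1 - (q : ℤ)))) • (((-1 : K) ^ p) •
          ((-(-1 : K) ^ (q * p)) •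
            (LinearMap.mulLeft K (mon a * mon c) ∘ₗ ((D b) ∘ₗ (D d))))) = 0 := by
    rw [smul_smul, smul_smul, ← sub_smul (M := Module.End K (ExteriorAlgebra K (Fin n → K)))]
    have hc : (-1 : K) ^ q
        - ((-1 : K) ^ ((1 - (p : ℤ)) * (1 - (q : ℤ)))) * (-1 : K) ^ p * (-(-1 : K) ^ (q * p))
        = 0 := by
      have hs := sign1 (K := K) p q
      linear_combination hs
    rw [hc, zero_smul]
  have hd : (LinearMap.mulLeft K (mon a * D b (mon c)) ∘ₗ D d
        + ((-1 : K) ^ q) • (LinearMap.mulLeft K (mon a * mon c) ∘ₗ ((D b) ∘ₗ (D d))))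
        - ((-1 : K) ^ ((1 - (p : ℤ)) * (1 - (q : ℤ)))) •
          (LinearMap.mulLeft K (mon c * D d (mon a)) ∘ₗ D b
            + ((-1 : K) ^ p) • ((-(-1 : K) ^ (q * p)) •
              (LinearMap.mulLeft K (mon a * mon c) ∘ₗ ((D b) ∘ₗ (D d)))))
      - (LinearMap.mulLeft K (mon a * D b (mon c)) ∘ₗ D d
        - ((-1 : K) ^ ((1 - (p : ℤ)) * (1 - (q : ℤ)))) •
            (LinearMap.mulLeft K (mon c * D d (mon a)) ∘ₗ D b))
      = ((-1 : K) ^ q) • (LinearMap.mulLeft K (mon a * mon c) ∘ₗ ((D b) ∘ₗ (D d)))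
      - ((-1 : K) ^ ((1 - (p : ℤ)) * (1 - (q : ℤ)))) • (((-1 : K) ^ p) •
          ((-(-1 : K) ^ (q * p)) •
            (LinearMap.mulLeft K (mon a * mon c) ∘ₗ ((D b) ∘ₗ (D d))))) := by
    module
  exact sub_eq_zero.mp (by rw [hd, hw])

lemma gen_bracket_mem {p q : ℕ} (a : Fin p → Fin n) (c : Fin q → Fin n) (b d : Fin n) :
    Kgen K n D p a b ∘ₗ Kgen K n D q c d
        - ((-1 : K) ^ ((1 - (p : ℤ)) * (1 - (q : ℤ)))) • (Kgen K n D q c d ∘ₗ Kgen K n D p a b)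
      ∈ Wlevel K n D ((1 - (p : ℤ)) + (1 - (q : ℤ))) := by
  rw [gen_bracket hD a c b d]
  refine sub_mem ?_ (Submodule.smul_mem _ _ ?_)
  · cases q with
    | zero =>
      rw [mon_zero, D_one hD, mul_zero, mulLeft_zero_D]
      exact zero_mem _
    | succ s =>
      have hu : mon a * D b (mon c) ∈ Mono K n (p + s) := by
        have h := D_mon_mem hD (s + 1) c b
        simpa using mon_mul_mono a h
      have h2 := mulLeft_mono_D (D := D) hu d
      have he : 1 - ((p + s : ℕ) : ℤ) = (1 - (p : ℤ)) + (1 - ((s + 1 : ℕ) : ℤ)) := by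
        push_cast
        ring
      rwa [he] at h2
  · cases p with
    | zero =>
      rw [mon_zero, D_one hD, mul_zero, mulLeft_zero_D]
      exact zero_mem _
    | succ s =>
      have hu : mon c * D d (mon a) ∈ Mono K n (q + s) := by
        have h := D_mon_mem hD (s + 1) a d
        simpa using mon_mul_mono c h
      have h2 := mulLeft_mono_D (D := D) hu b
      have he : 1 - ((q + s : ℕ) : ℤ) = (1 - ((s + 1 : ℕ) : ℤ)) + (1 - (q : ℤ)) := by
        push_cast
        ring
      rwa [he] at h2

lemma cross_comm {p q : ℕ} (a : Fin p → Fin n) (c : Fin q → Fin n) (b d : Fin n) :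
    D d (mon a) * D b (mon c)
      = ((-1 : K) ^ ((1 - (p : ℤ)) * (1 - (q : ℤ)))) • (D b (mon c) * D d (mon a)) := by
  rcases Nat.eq_zero_or_pos p with hp | hp
  · subst hp
    rw [mon_zero, D_one hD]
    simp
  rcases Nat.eq_zero_or_pos q with hq | hq
  · subst hq
    rw [mon_zero (a := c), D_one hD]
    simp
  have hm := mono_comm (D_mon_mem hD p a d) (D_mon_mem hD q c b)
  have hs : ((-1 : K) ^ ((1 - (p : ℤ)) * (1 - (q : ℤ))))
      = (-1 : K) ^ (((p - 1) * (q - 1) : ℕ)) := by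
    rw [← zpow_natCast]
    apply neg_one_zpow_congr
    have h0 : (1 - (p : ℤ)) * (1 - (q : ℤ)) - ((((p - 1) * (q - 1) : ℕ)) : ℤ) = 2 * 0 := by
      push_cast [Nat.cast_sub hp, Nat.cast_sub hq]
      ring
    rw [h0]
    exact even_two_mul 0
  rw [hs]
  exact hm

lemma gen_div {p q : ℕ} (a : Fin p → Fin n) (c : Fin q → Fin n) (b d : Fin n) :
    divMap K n D (Kgen K n D p a b ∘ₗ Kgen K n D q c d
        - ((-1 : K) ^ ((1 - (p : ℤ)) * (1 - (q : ℤ)))) • (Kgen K n D q c d ∘ₗ Kgen K n D p a b))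
      = (-(-1 : K) ^ p) • (Kgen K n D p a b (divMap K n D (Kgen K n D q c d)))
        + (((-1 : K) ^ ((1 - (p : ℤ)) * (1 - (q : ℤ)))) * ((-1 : K) ^ q)) •
            (Kgen K n D q c d (divMap K n D (Kgen K n D p a b))) := by
  rw [gen_bracket hD a c b d, map_sub, map_smul, div_mulLeft_D hD, div_mulLeft_D hD]
  rw [Kgen_eq, Kgen_eq, LinearMap.comp_apply, LinearMap.mulLeft_apply,
    LinearMap.comp_apply, LinearMap.mulLeft_apply,
    div_mulLeft_D hD, div_mulLeft_D hD]
  rw [leibniz hD (mon_mem_deg a) d (D b (mon c)), leibniz hD (mon_mem_deg c) b (D d (mon a)),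
    D_anticomm hD d b (mon c), D_anticomm hD b d (mon a), cross_comm hD a c b d]
  simp only [mul_neg, smul_neg, neg_smul]
  module

end Gen

end S13
namespace S13

section Master

variable {K : Type} [Field K] {n : ℕ}
  {D : Fin n → Module.End K (ExteriorAlgebra K (Fin n → K))}
  (hD : IsPartials K n D)

include hD

lemma bracket_master (i j : ℤ) {x y : Module.End K (ExteriorAlgebra K (Fin n → K))}
    (hx : x ∈ Wlevel K n D i) (hy : y ∈ Wlevel K n D j) :
    (x ∘ₗ y - ((-1 : K) ^ (i * j)) • (y ∘ₗ x) ∈ Wlevel K n D (i + j)) ∧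
    divMap K n D (x ∘ₗ y - ((-1 : K) ^ (i * j)) • (y ∘ₗ x))
      = (-(-1 : K) ^ (1 - i)) • x (divMap K n D y)
        + (((-1 : K) ^ (i * j)) * ((-1 : K) ^ (1 - j))) • y (divMap K n D x) := by
  induction hx using Submodule.span_induction with
  | mem x hxg =>
    induction hy using Submodule.span_induction with
    | mem y hyg =>
      obtain ⟨p, a, b, rfl, rfl⟩ := hxg
      obtain ⟨q, c, d, rfl, rfl⟩ := hyg
      constructor
      · exact gen_bracket_mem hD a c b d
      · have e1 : (1 - (1 - (p : ℤ))) = ((p : ℕ) : ℤ) := by ring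
        have e2 : (1 - (1 - (q : ℤ))) = ((q : ℕ) : ℤ) := by ring
        rw [e1, e2, zpow_natCast, zpow_natCast]
        exact gen_div hD a c b d
    | zero =>
      constructor
      · simp only [LinearMap.comp_zero, LinearMap.zero_comp, smul_zero, sub_zero]
        exact zero_mem _
      · simp
    | add y1 y2 hy1 hy2 h1 h2 =>
      have hsplit : x ∘ₗ (y1 + y2) - ((-1 : K) ^ (i * j)) • ((y1 + y2) ∘ₗ x)
          = (x ∘ₗ y1 - ((-1 : K) ^ (i * j)) • (y1 ∘ₗ x))
            + (x ∘ₗ y2 - ((-1 : K) ^ (i * j)) • (y2 ∘ₗ x)) := by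
        rw [LinearMap.comp_add, LinearMap.add_comp, smul_add]
        abel
      constructor
      · rw [hsplit]; exact add_mem h1.1 h2.1
      · rw [hsplit, map_add, h1.2, h2.2]
        simp only [map_add, LinearMap.add_apply, smul_add]
        abel
    | smul t y1 hy1 h1 =>
      have hsplit : x ∘ₗ (t • y1) - ((-1 : K) ^ (i * j)) • ((t • y1) ∘ₗ x)
          = t • (x ∘ₗ y1 - ((-1 : K) ^ (i * j)) • (y1 ∘ₗ x)) := by
        apply LinearMap.ext
        intro z
        simp only [LinearMap.sub_apply, LinearMap.comp_apply, LinearMap.smul_apply, map_smul,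
          smul_sub, smul_smul, mul_comm]
      constructor
      · rw [hsplit]; exact Submodule.smul_mem _ _ h1.1
      · rw [hsplit, map_smul, h1.2]
        simp only [map_smul, LinearMap.smul_apply]
        module
  | zero =>
    constructor
    · simp only [LinearMap.zero_comp, LinearMap.comp_zero, smul_zero, sub_zero]
      exact zero_mem _
    · simp
  | add x1 x2 hx1 hx2 h1 h2 =>
    have hsplit : (x1 + x2) ∘ₗ y - ((-1 : K) ^ (i * j)) • (y ∘ₗ (x1 + x2))
        = (x1 ∘ₗ y - ((-1 : K) ^ (i * j)) • (y ∘ₗ x1))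
          + (x2 ∘ₗ y - ((-1 : K) ^ (i * j)) • (y ∘ₗ x2)) := by
      rw [LinearMap.add_comp, LinearMap.comp_add, smul_add]
      abel
    constructor
    · rw [hsplit]; exact add_mem h1.1 h2.1
    · rw [hsplit, map_add, h1.2, h2.2]
      simp only [map_add, LinearMap.add_apply, smul_add]
      abel
  | smul t x1 hx1 h1 =>
    have hsplit : (t • x1) ∘ₗ y - ((-1 : K) ^ (i * j)) • (y ∘ₗ (t • x1))
        = t • (x1 ∘ₗ y - ((-1 : K) ^ (i * j)) • (y ∘ₗ x1)) := by
      apply LinearMap.ext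
      intro z
      simp only [LinearMap.sub_apply, LinearMap.comp_apply, LinearMap.smul_apply, map_smul,
        smul_sub, smul_smul, mul_comm]
    constructor
    · rw [hsplit]; exact Submodule.smul_mem _ _ h1.1
    · rw [hsplit, map_smul, h1.2]
      simp only [map_smul, LinearMap.smul_apply]
      module

omit hD in
lemma Wlevel_bot {ℓ : ℤ} (hℓ : ℓ < 1 - (n : ℤ)) : Wlevel K n D ℓ = ⊥ := by
  rw [Wlevel, eq_bot_iff]
  apply Submodule.span_le.mpr
  rintro x ⟨p, a, b, h1, rfl⟩
  have hp : n < p := by omega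
  simp only [SetLike.mem_coe, Submodule.mem_bot]
  rw [Kgen_eq, mon_eq_zero_of_large a hp, mulLeft_zero_D]

lemma level_n_apply_ne_one {x : Module.End K (ExteriorAlgebra K (Fin n → K))}
    (hx : x ∈ Wlevel K n D (1 - (n : ℤ))) :
    ∀ (q : ℕ), q ≠ 1 → ∀ c : Fin q → Fin n, x (mon c) = 0 := by
  induction hx using Submodule.span_induction with
  | mem x hxg =>
    obtain ⟨p, a, b, h1, rfl⟩ := hxg
    have hpn : p = n := by omega
    subst hpn
    intro q hq c
    rw [Kgen_eq, LinearMap.comp_apply, LinearMap.mulLeft_apply]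
    match q, hq with
    | 0, _ =>
      rw [mon_zero, D_one hD, mul_zero]
    | (s+2), _ =>
      have hm := mon_mul_mono a (D_mon_mem hD (s + 2) c b)
      rw [mono_eq_bot (by omega)] at hm
      simpa using hm
  | zero => intro q hq c; simp
  | add x1 x2 _ _ h1 h2 =>
    intro q hq c
    rw [LinearMap.add_apply, h1 q hq c, h2 q hq c, add_zero]
  | smul t x1 _ h1 =>
    intro q hq c
    rw [LinearMap.smul_apply, h1 q hq c, smul_zero]

lemma level_n_theta {x : Module.End K (ExteriorAlgebra K (Fin n → K))}
    (hx : x ∈ Wlevel K n D (1 - (n : ℤ))) (b0 : Fin n) :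
    x (theta K n b0) = theta K n b0 * divMap K n D x := by
  induction hx using Submodule.span_induction with
  | mem x hxg =>
    obtain ⟨p, a, b, h1, rfl⟩ := hxg
    have hpn : p = n := by omega
    subst hpn
    rw [Kgen_eq, LinearMap.comp_apply, LinearMap.mulLeft_apply, (hD b).2 b0,
      ← Algebra.commutes, ← Algebra.smul_def, div_mulLeft_D hD]
    have h := D_theta_mul hD b b0 (mon a)
    have hz : theta K _ b0 * mon a = 0 := by
      rw [theta_mul_mon]
      exact mon_eq_zero_of_large _ (by omega)
    rw [hz, map_zero] at h
    have h2 := (sub_eq_zero.mp h.symm).symm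
    rw [h2]
  | zero => simp
  | add x1 x2 _ _ h1 h2 =>
    rw [LinearMap.add_apply, h1, h2, map_add, mul_add]
  | smul t x1 _ h1 =>
    rw [LinearMap.smul_apply, h1, map_smul, mul_smul_comm]

lemma Slevel_n_bot : Slevel K n D (1 - (n : ℤ)) = ⊥ := by
  rw [eq_bot_iff]
  intro x hx
  rw [Slevel, Submodule.mem_inf, LinearMap.mem_ker] at hx
  obtain ⟨hxW, hxk⟩ := hx
  rw [Submodule.mem_bot]
  apply End_ext (g := 0)
  intro p c
  rw [LinearMap.zero_apply]
  by_cases hp : p = 1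
  · subst hp
    rw [mon_one, level_n_theta hD hxW, hxk, mul_zero]
  · exact level_n_apply_ne_one hD hxW p hp c

end Master

end S13

/-- The divergence-zero derivations `S(n) ⊂ W(n)` form a `ℤ`-graded Lie
subalgebra of `W(n)` (closed under the superbracket, level-wise), whose components vanish
below level `−n+2`. -/
theorem S_graded_subalgebra (K : Type) [Field K] [CharZero K] (n : ℕ)
    (D : Fin n → Module.End K (ExteriorAlgebra K (Fin n → K)))
    (hD : IsPartials K n D) :
    (∀ i j : ℤ, ∀ x ∈ Slevel K n D i, ∀ y ∈ Slevel K n D j,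
      x ∘ₗ y - ((-1 : K) ^ (i * j)) • (y ∘ₗ x) ∈ Slevel K n D (i + j)) ∧
    (∀ ℓ : ℤ, ℓ < 2 - (n : ℤ) → Slevel K n D ℓ = ⊥) := by
  constructor
  · intro i j x hx y hy
    rw [Slevel, Submodule.mem_inf, LinearMap.mem_ker] at hx hy
    obtain ⟨hxW, hxk⟩ := hx
    obtain ⟨hyW, hyk⟩ := hy
    have h := S13.bracket_master hD i j hxW hyW
    rw [Slevel, Submodule.mem_inf, LinearMap.mem_ker]
    refine ⟨h.1, ?_⟩
    rw [h.2, hxk, hyk]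
    simp
  · intro ℓ hℓ
    by_cases hc : ℓ = 1 - (n : ℤ)
    · subst hc
      exact S13.Slevel_n_bot hD
    · have hlt : ℓ < 1 - (n : ℤ) := by omega
      rw [Slevel, S13.Wlevel_bot hlt, bot_inf_eq]
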